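/- Fix vectors x_1, …, x_T ∈ ℝ^m, an initialization w_0 ∈ ℝ^m, and η > 0. For ANY causal estimator, i.e., any family of maps F_i : ℝ^i → ℝ^m producing estimates w_i = F_i(y_1, …, y_i) for i = 1, …, T, there exist a parameter ŵ ∈ ℝ^m and noise values v̂_1, …, v̂_T (with labels y_i := x_iᵀŵ + v̂_i fed to the estimator) such that ‖ŵ − w_0‖² + η Σ_{i=1}^T v̂_i² > 0 and ‖ŵ − w_T‖² + η Σ_{i=1}^T (x_iᵀŵ − x_iᵀw_{i−1})² = ‖ŵ − w_0‖² + η Σ_{i=1}^T v̂_i². Consequently no estimator can achieve a worst-case ratio smaller than 1. -/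

import Mathlib

open scoped RealInnerProductSpace

noncomputable def Wseq {m : ℕ} (x : ℕ → EuclideanSpace ℝ (Fin m))
    (w₀ : EuclideanSpace ℝ (Fin m))
    (F : (i : ℕ) → (Fin i → ℝ) → EuclideanSpace ℝ (Fin m)) : ℕ → EuclideanSpace ℝ (Fin m)
  | 0 => w₀
  | (i + 1) => F (i + 1) (fun j : Fin (i + 1) => ⟪x (j.1 + 1), Wseq x w₀ F j.1⟫)
  decreasing_by exact j.2

/-- (lower bound part of Theorem 1: against any causal estimator, the
adversary can make the ratio of estimation-error energy to disturbance energy exactly 1,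
with positive disturbance energy; hence no estimator beats ratio 1).
The estimator is an arbitrary family of maps `F i : ℝ^i → ℝ^m`; its iterates are
`w (i+1) = F (i+1) (y 1, …, y (i+1))` with `w 0 = w₀`, and the labels fed to it are
`y i = ⟪x i, ŵ⟫ + v̂ i`. -/
theorem stmt_3 {m : ℕ} (hm : 0 < m) (T : ℕ) (hT : 1 ≤ T)
    (x : ℕ → EuclideanSpace ℝ (Fin m))
    (w₀ : EuclideanSpace ℝ (Fin m))
    (η : ℝ) (hη : 0 < η)
    (F : (i : ℕ) → (Fin i → ℝ) → EuclideanSpace ℝ (Fin m)) :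
    ∃ (what : EuclideanSpace ℝ (Fin m)) (vhat : ℕ → ℝ),
      ∀ (y : ℕ → ℝ) (w : ℕ → EuclideanSpace ℝ (Fin m)),
        (∀ i : ℕ, y (i + 1) = ⟪x (i + 1), what⟫ + vhat (i + 1)) →
        w 0 = w₀ →
        (∀ i : ℕ, w (i + 1) = F (i + 1) (fun j : Fin (i + 1) => y (j.1 + 1))) →
        0 < ‖what - w₀‖ ^ 2 + η * ∑ i ∈ Finset.range T, vhat (i + 1) ^ 2 ∧
        ‖what - w T‖ ^ 2
            + η * ∑ i ∈ Finset.range T, (⟪x (i + 1), what⟫ - ⟪x (i + 1), w i⟫) ^ 2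
          = ‖what - w₀‖ ^ 2 + η * ∑ i ∈ Finset.range T, vhat (i + 1) ^ 2 := by
  set W : ℕ → EuclideanSpace ℝ (Fin m) := Wseq x w₀ F with hW
  -- choose `what` so that `‖what - W T‖ = ‖what - w₀‖` and `what ≠ w₀`
  obtain ⟨what, hnorm, hne⟩ :
      ∃ what : EuclideanSpace ℝ (Fin m), ‖what - W T‖ = ‖what - w₀‖ ∧ what ≠ w₀ := by
    by_cases h : W T = w₀
    · refine ⟨w₀ + EuclideanSpace.single (⟨0, hm⟩ : Fin m) (1 : ℝ), by rw [h], ?_⟩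
      intro hc
      have : EuclideanSpace.single (⟨0, hm⟩ : Fin m) (1 : ℝ) = 0 := by
        have := congrArg (fun z => z - w₀) hc
        simpa using this
      have := congrArg (fun v => v (⟨0, hm⟩ : Fin m)) this
      simp [EuclideanSpace.single] at this
    · refine ⟨(2 : ℝ)⁻¹ • (w₀ + W T), ?_, ?_⟩
      · have h1 : (2 : ℝ)⁻¹ • (w₀ + W T) - W T = (2 : ℝ)⁻¹ • (w₀ - W T) := by
          rw [smul_sub, smul_add]; module
        have h2 : (2 : ℝ)⁻¹ • (w₀ + W T) - w₀ = (2 : ℝ)⁻¹ • (W T - w₀) := by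
          rw [smul_sub, smul_add]; module
        rw [h1, h2, norm_smul, norm_smul, norm_sub_rev]
      · intro hc
        apply h
        have : (2 : ℝ)⁻¹ • (w₀ + W T) - w₀ = 0 := by rw [hc]; simp
        have h2 : (2 : ℝ)⁻¹ • (W T - w₀) = 0 := by
          rw [← this, smul_sub, smul_add]; module
        have := smul_eq_zero.mp h2
        simp at this
        exact sub_eq_zero.mp this
  refine ⟨what, fun i => ⟪x i, W (i - 1)⟫ - ⟪x i, what⟫, ?_⟩
  intro y w hy hw0 hws
  -- labels equal the fixed labels
  have hy' : ∀ i : ℕ, y (i + 1) = ⟪x (i + 1), W i⟫ := by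
    intro i; rw [hy i]; simp
  have hwW : ∀ i : ℕ, w i = W i := by
    intro i
    cases i with
    | zero => simpa [hW, Wseq] using hw0
    | succ n =>
        rw [hws n, hW, Wseq]
        exact congrArg _ (funext fun j => hy' j.1)
  have hsum : ∀ i : ℕ, (⟪x (i + 1), what⟫ - ⟪x (i + 1), w i⟫) ^ 2
      = (⟪x (i + 1), W (i + 1 - 1)⟫ - ⟪x (i + 1), what⟫) ^ 2 := by
    intro i
    rw [hwW i]
    simp only [Nat.add_sub_cancel]
    ring
  constructor
  · have h1 : 0 < ‖what - w₀‖ ^ 2 := by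
      exact pow_pos (norm_sub_pos_iff.mpr hne) 2
    have h2 : 0 ≤ ∑ i ∈ Finset.range T, (⟪x (i + 1), W (i + 1 - 1)⟫ - ⟪x (i + 1), what⟫) ^ 2 :=
      Finset.sum_nonneg fun i _ => sq_nonneg _
    nlinarith
  · rw [hwW T, ← hnorm]
    congr 1
    congr 1
    exact Finset.sum_congr rfl fun i _ => hsum i
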